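/- Let H = (h_{vv'}) be a symmetric real n×n matrix and l ∈ ℝⁿ a vector with no zero entry such that H l = 0. Then for every x ∈ ℝⁿ, xᵀHx = -(1/2) Σ_{v,v'} h_{vv'} l_v l_{v'} (x_v/l_v - x_{v'}/l_{v'})². -/
import Mathlib


theorem stmt_2 (n : ℕ) (H : Matrix (Fin n) (Fin n) ℝ)
    (hsymm : H.IsSymm) (l : Fin n → ℝ) (hl : ∀ v, l v ≠ 0)
    (hker : H.mulVec l = 0) (x : Fin n → ℝ) :
    ∑ v, ∑ v', x v * H v v' * x v' =
      -(1/2) * ∑ v, ∑ v', H v v' * l v * l v' * (x v / l v - x v' / l v') ^ 2 := by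
  have hk : ∀ v, ∑ v', H v v' * l v' = 0 := by
    intro v
    have := congrFun hker v
    simpa [Matrix.mulVec, dotProduct] using this
  have hk2 : ∀ v', ∑ v, H v v' * l v = 0 := by
    intro v'
    have : ∑ v, H v v' * l v = ∑ v, H v' v * l v := by
      apply Finset.sum_congr rfl
      intro v _
      rw [hsymm.apply]
    rw [this, hk v']
  have key : ∑ v, ∑ v', H v v' * l v * l v' * (x v / l v - x v' / l v') ^ 2
      = ∑ v, ∑ v', (H v v' * l v' * (x v ^ 2 / l v)
          + H v v' * l v * (x v' ^ 2 / l v') - 2 * (x v * H v v' * x v')) := by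
    apply Finset.sum_congr rfl; intro v _
    apply Finset.sum_congr rfl; intro v' _
    field_simp [hl v, hl v']
    ring
  rw [key]
  have h1 : ∑ v, ∑ v', H v v' * l v' * (x v ^ 2 / l v) = 0 := by
    apply Finset.sum_eq_zero
    intro v _
    have : ∑ v', H v v' * l v' * (x v ^ 2 / l v)
        = (∑ v', H v v' * l v') * (x v ^ 2 / l v) := by
      rw [Finset.sum_mul]
    rw [this, hk v, zero_mul]
  have h2 : ∑ v, ∑ v', H v v' * l v * (x v' ^ 2 / l v') = 0 := by
    rw [Finset.sum_comm]
    apply Finset.sum_eq_zero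
    intro v' _
    have : ∑ v, H v v' * l v * (x v' ^ 2 / l v')
        = (∑ v, H v v' * l v) * (x v' ^ 2 / l v') := by
      rw [Finset.sum_mul]
    rw [this, hk2 v', zero_mul]
  simp only [Finset.sum_sub_distrib, Finset.sum_add_distrib, h1, h2,
    ← Finset.mul_sum]
  ring
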